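/- Let X be a compact metric space, φ : X → X a homeomorphism admitting a point x₀ whose φ-orbit {φ^n(x₀) : n ∈ ℤ} is dense in X, and let G be a group acting effectively on X by homeomorphisms commuting with φ. Then for every g ∈ G with g ≠ e, the set {x ∈ X : g·x ≠ x} is open and dense in X. -/

import Mathlib

/-- Proposition 2.8: for an effective action commuting with a homeomorphism having
a dense orbit, each non-fixed-point set is open and dense. -/
theorem stmt1 {X : Type*} [MetricSpace X] [CompactSpace X]
    (φ : X ≃ₜ X) (x₀ : X)
    (hdense : Dense (Set.range fun n : ℤ => (φ.toEquiv ^ n) x₀))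
    {G : Type*} [Group G] [MulAction G X]
    (hcont : ∀ g : G, Continuous fun x : X => g • x)
    (hcomm : ∀ (g : G) (x : X), g • (φ x) = φ (g • x))
    (heff : ∀ g : G, g ≠ 1 → ∃ x : X, g • x ≠ x)
    (g : G) (hg : g ≠ 1) :
    IsOpen {x : X | g • x ≠ x} ∧ Dense {x : X | g • x ≠ x} := by
  have hcomm' : ∀ x : X, g • (φ.symm x) = φ.symm (g • x) := by
    intro x
    have := hcomm g (φ.symm x)
    rw [φ.apply_symm_apply] at this
    rw [this, φ.symm_apply_apply]
  have key : ∀ (n : ℤ) (x : X), g • ((φ.toEquiv ^ n) x) = (φ.toEquiv ^ n) (g • x) := by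
    intro n
    induction n using Int.induction_on with
    | zero => intro x; simp
    | succ k ih =>
        intro x
        have h1 : φ.toEquiv ^ ((k : ℤ) + 1) = φ.toEquiv ^ (k : ℤ) * φ.toEquiv := by
          rw [zpow_add_one]
        simp only [h1, Equiv.Perm.mul_apply]
        rw [ih]
        congr 1
        exact hcomm g x
    | pred k ih =>
        intro x
        have h1 : φ.toEquiv ^ (-(k : ℤ) - 1) = φ.toEquiv ^ (-(k : ℤ)) * (φ.toEquiv)⁻¹ := by
          rw [zpow_sub_one]
        simp only [h1, Equiv.Perm.mul_apply]
        rw [ih]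
        congr 1
        exact hcomm' x
  have hF : IsClosed {x : X | g • x = x} :=
    isClosed_eq (hcont g) continuous_id
  have hopen : IsOpen {x : X | g • x ≠ x} := hF.isOpen_compl
  refine ⟨hopen, ?_⟩
  by_contra hnd
  have hset : {x : X | g • x ≠ x} = {x : X | g • x = x}ᶜ := rfl
  rw [hset, ← interior_eq_empty_iff_dense_compl] at hnd
  have hint : ∃ x, x ∈ interior {x : X | g • x = x} :=
    Set.nonempty_iff_ne_empty.mpr hnd
  obtain ⟨x, hx⟩ := hint
  obtain ⟨y, ⟨n, rfl⟩, hy⟩ := hdense.exists_mem_open isOpen_interior ⟨x, hx⟩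
  have h0 : g • x₀ = x₀ := by
    have hy2 : (φ.toEquiv ^ n) x₀ ∈ {x : X | g • x = x} := interior_subset hy
    have hyF : g • (φ.toEquiv ^ n) x₀ = (φ.toEquiv ^ n) x₀ := hy2
    rw [key n x₀] at hyF
    exact (φ.toEquiv ^ n).injective hyF
  have hall : Set.range (fun m : ℤ => (φ.toEquiv ^ m) x₀) ⊆ {x : X | g • x = x} := by
    rintro _ ⟨m, rfl⟩
    simp only [Set.mem_setOf_eq, key m x₀, h0]
  obtain ⟨z, hz⟩ := heff g hg
  have : z ∈ {x : X | g • x = x} := by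
    have hsub : closure (Set.range fun m : ℤ => (φ.toEquiv ^ m) x₀) ⊆ {x : X | g • x = x} :=
      hF.closure_subset_iff.mpr hall
    exact hsub (by rw [hdense.closure_eq]; trivial)
  exact hz this
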